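/- arXiv:1705.10469 — 2 statements merged into one kernel-verified Lean document; each statement's English description precedes it below -/
import Mathlib

section
/- Two loxodromic elements A, A' ∈ SU(n,1) are conjugate in GL(n+1,ℂ) if and only if tr(A^k) = tr(A'^k) for 1 ≤ k ≤ ⌊(n+1)/2⌋. -/
open Matrix Complex

/-- The Hermitian matrix of signature (n,1): H(0,n)=H(n,0)=1, H(i,i)=1 for 1 ≤ i ≤ n-1. -/
def Hm (n : ℕ) : Matrix (Fin (n+1)) (Fin (n+1)) ℂ :=
  fun i j =>
    if (i = 0 ∧ j = Fin.last n) ∨ (i = Fin.last n ∧ j = 0) then 1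
    else if i = j ∧ i ≠ 0 ∧ i ≠ Fin.last n then 1 else 0

/-- Membership in SU(n,1): determinant 1 and preservation of the form given by `Hm n`. -/
def inSU (n : ℕ) (A : Matrix (Fin (n+1)) (Fin (n+1)) ℂ) : Prop :=
  A.det = 1 ∧ Aᴴ * Hm n * A = Hm n

/-- The Hermitian form ⟨z,w⟩ = w* H z. -/
noncomputable def herm (n : ℕ) (z w : Fin (n+1) → ℂ) : ℂ :=
  star w ⬝ᵥ (Hm n).mulVec z

/-- A loxodromic element: diagonalizable with eigenvalues r e^{iθ}, r⁻¹ e^{iθ} (r > 1)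
and the remaining n-1 eigenvalues of modulus 1. -/
def IsLoxodromic (n : ℕ) (A : Matrix (Fin (n+1)) (Fin (n+1)) ℂ) : Prop :=
  ∃ (P : Matrix (Fin (n+1)) (Fin (n+1)) ℂ) (d : Fin (n+1) → ℂ) (r θ : ℝ),
    IsUnit P ∧ A = P * Matrix.diagonal d * P⁻¹ ∧ 1 < r ∧
    d 0 = (r : ℂ) * Complex.exp (θ * Complex.I) ∧
    d (Fin.last n) = (r : ℂ)⁻¹ * Complex.exp (θ * Complex.I) ∧
    ∀ i, i ≠ 0 → i ≠ Fin.last n → ‖d i‖ = 1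

section Aux
open Polynomial
-- conj pow
lemma aux_conj_pow {c : ℕ} (P M : Matrix (Fin c) (Fin c) ℂ) (hP : IsUnit P) (k : ℕ) :
    (P * M * P⁻¹) ^ k = P * M ^ k * P⁻¹ := by
  have hPd : IsUnit P.det := (Matrix.isUnit_iff_isUnit_det P).mp hP
  induction k with
  | zero => simp [Matrix.mul_nonsing_inv P hPd]
  | succ k ih =>
    rw [pow_succ, ih, pow_succ]
    calc P * M ^ k * P⁻¹ * (P * M * P⁻¹) = P * M ^ k * (P⁻¹ * P) * M * P⁻¹ := by
          noncomm_ring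
      _ = P * (M ^ k * M) * P⁻¹ := by rw [Matrix.nonsing_inv_mul P hPd]; noncomm_ring

lemma aux_trace_conj_pow {c : ℕ} (P M : Matrix (Fin c) (Fin c) ℂ) (hP : IsUnit P) (k : ℕ) :
    ((P * M * P⁻¹) ^ k).trace = (M ^ k).trace := by
  have hPd : IsUnit P.det := (Matrix.isUnit_iff_isUnit_det P).mp hP
  rw [aux_conj_pow P M hP k, Matrix.trace_mul_cycle, Matrix.nonsing_inv_mul P hPd, one_mul]

lemma aux_trace_pow {c : ℕ} (P : Matrix (Fin c) (Fin c) ℂ) (d : Fin c → ℂ) (hP : IsUnit P)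
    (k : ℕ) : ((P * Matrix.diagonal d * P⁻¹) ^ k).trace = ∑ i, d i ^ k := by
  rw [aux_trace_conj_pow P _ hP k, Matrix.diagonal_pow, Matrix.trace_diagonal]
  simp [Pi.pow_apply]

lemma aux_charpoly_conj {c : ℕ} (P M : Matrix (Fin c) (Fin c) ℂ) (hP : IsUnit P) :
    (P * M * P⁻¹).charpoly = M.charpoly := by
  have hPd : IsUnit P.det := (Matrix.isUnit_iff_isUnit_det P).mp hP
  have h1 : (P * P⁻¹) = 1 := Matrix.mul_nonsing_inv P hPd
  have h2 : ((C : ℂ →+* ℂ[X]).mapMatrix P) * ((C : ℂ →+* ℂ[X]).mapMatrix P⁻¹) = 1 := by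
    rw [← _root_.map_mul, h1, _root_.map_one]
  have key : charmatrix (P * M * P⁻¹) =
      (C : ℂ →+* ℂ[X]).mapMatrix P * charmatrix M * (C : ℂ →+* ℂ[X]).mapMatrix P⁻¹ := by
    rw [charmatrix, charmatrix, Matrix.mul_sub, Matrix.sub_mul, ← _root_.map_mul,
      ← _root_.map_mul]
    congr 1
    rw [mul_assoc, (Matrix.scalar_commute (X : ℂ[X]) (fun r => Commute.all X r)
      ((C : ℂ →+* ℂ[X]).mapMatrix P⁻¹)).eq, ← mul_assoc, h2, one_mul]
  have h3 : ((C : ℂ →+* ℂ[X]).mapMatrix P).det * ((C : ℂ →+* ℂ[X]).mapMatrix P⁻¹).det = 1 := by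
    rw [← Matrix.det_mul, h2, Matrix.det_one]
  rw [Matrix.charpoly, Matrix.charpoly, key, Matrix.det_mul, Matrix.det_mul,
    mul_right_comm, h3, one_mul]

lemma aux_charpoly_diagonal {c : ℕ} (d : Fin c → ℂ) :
    (Matrix.diagonal d).charpoly
      = ((Finset.univ.val.map d).map (fun z => X - Polynomial.C z)).prod := by
  have h : charmatrix (Matrix.diagonal d) = Matrix.diagonal (fun i => X - Polynomial.C (d i)) := by
    ext i j
    rcases eq_or_ne i j with rfl | hij
    · rw [charmatrix_apply_eq, Matrix.diagonal_apply_eq, Matrix.diagonal_apply_eq]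
    · rw [charmatrix_apply_ne _ _ _ hij, Matrix.diagonal_apply_ne _ hij,
        Matrix.diagonal_apply_ne _ hij, map_zero, neg_zero]
  rw [Matrix.charpoly, h, Matrix.det_diagonal, Multiset.map_map, Finset.prod_eq_multiset_prod]
  rfl

lemma aux_newton_eval {c : ℕ} (d : Fin c → ℂ) (k : ℕ) :
    (k : ℂ) * (Finset.univ.val.map d).esymm k =
      (-1) ^ (k + 1) * ∑ a ∈ (Finset.HasAntidiagonal.antidiagonal k).filter (fun a => a.1 < k),
        (-1) ^ a.1 * (Finset.univ.val.map d).esymm a.1 * ∑ i, d i ^ a.2 := by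
  have h := congrArg (MvPolynomial.aeval d) (MvPolynomial.mul_esymm_eq_sum (Fin c) ℂ k)
  simpa [map_sum, _root_.map_mul, map_pow, MvPolynomial.aeval_esymm_eq_multiset_esymm,
    MvPolynomial.psum, map_natCast] using h

lemma aux_esymm_eq {c : ℕ} (d d' : Fin c → ℂ)
    (htr : ∀ k : ℕ, 1 ≤ k → k ≤ c / 2 → ∑ i, d i ^ k = ∑ i, d' i ^ k) :
    ∀ j : ℕ, j ≤ c / 2 →
      (Finset.univ.val.map d).esymm j = (Finset.univ.val.map d').esymm j := by
  intro j
  induction j using Nat.strong_induction_on with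
  | _ j ih =>
    intro hj
    rcases Nat.eq_zero_or_pos j with rfl | hj1
    · simp [Multiset.esymm, Multiset.powersetCard_zero_left]
    · have h1 := aux_newton_eval d j
      have h2 := aux_newton_eval d' j
      have hsum : ∑ a ∈ (Finset.HasAntidiagonal.antidiagonal j).filter (fun a => a.1 < j),
            (-1 : ℂ) ^ a.1 * (Finset.univ.val.map d).esymm a.1 * ∑ i, d i ^ a.2
          = ∑ a ∈ (Finset.HasAntidiagonal.antidiagonal j).filter (fun a => a.1 < j),
            (-1 : ℂ) ^ a.1 * (Finset.univ.val.map d').esymm a.1 * ∑ i, d' i ^ a.2 := by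
        refine Finset.sum_congr rfl (fun a ha => ?_)
        rw [Finset.mem_filter, Finset.HasAntidiagonal.mem_antidiagonal] at ha
        obtain ⟨hsumeq, hlt⟩ := ha
        have h2pos : 1 ≤ a.2 := by omega
        have h2le : a.2 ≤ c / 2 := by omega
        rw [ih a.1 hlt (by omega), htr a.2 h2pos h2le]
      have : (j : ℂ) * (Finset.univ.val.map d).esymm j
          = (j : ℂ) * (Finset.univ.val.map d').esymm j := by rw [h1, h2, hsum]
      exact mul_left_cancel₀ (Nat.cast_ne_zero.mpr (by omega)) this
lemma aux_reverse_X_sub_C (z : ℂ) : (X - C z).reverse = 1 - C z * X := by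
  rw [reverse, natDegree_X_sub_C, reflect_sub, reflect_C, pow_one, ← pow_one (X : ℂ[X]),
    reflect_monomial, revAt_le (by norm_num), pow_one]
  norm_num

lemma aux_reverse_prod (s : Multiset ℂ[X]) : s.prod.reverse = (s.map Polynomial.reverse).prod := by
  induction s using Multiset.induction_on with
  | empty => simp [reverse]
  | cons a s ih => simp [Multiset.prod_cons, Polynomial.reverse_mul_of_domain, ih]


lemma aux_coeff_dual {c : ℕ} (M : Multiset ℂ) (hcard : Multiset.card M = c)
    (hprod : M.prod = 1)
    (hdual : M.map (starRingEnd ℂ) = M.map Inv.inv)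
    {k : ℕ} (hk : k ≤ c) :
    (M.map (fun z => X - C z)).prod.coeff k
      = (-1 : ℂ) ^ c * (starRingEnd ℂ) ((M.map (fun z => X - C z)).prod.coeff (c - k)) := by
  have hmono : ∀ p ∈ M.map (fun z => X - C z), p.Monic := by
    intro p hp
    obtain ⟨z, _, rfl⟩ := Multiset.mem_map.mp hp
    exact monic_X_sub_C z
  have hdeg : (M.map (fun z => X - C z)).prod.natDegree = c := by
    rw [natDegree_multiset_prod_of_monic _ hmono]
    simp [Multiset.map_map, Function.comp_def, natDegree_X_sub_C, Multiset.map_const',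
      Multiset.sum_replicate, hcard]
  have hz : ∀ z ∈ M, z ≠ 0 := by
    intro z hzM h0
    rw [h0] at hzM
    rw [Multiset.prod_eq_zero hzM] at hprod
    exact zero_ne_one hprod
  have hmapconj : (M.map (fun z => X - C z)).prod.map (starRingEnd ℂ)
      = (M.map (fun z => X - C z⁻¹)).prod := by
    have hh := Multiset.prod_hom (M.map fun z => X - C z)
      (mapRingHom (starRingEnd ℂ) : ℂ[X] →+* ℂ[X])
    simp only [coe_mapRingHom] at hh
    rw [← hh, Multiset.map_map]
    have h1 : M.map ((Polynomial.map (starRingEnd ℂ)) ∘ (fun z => X - C z))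
        = (M.map (starRingEnd ℂ)).map (fun w => X - C w) := by
      rw [Multiset.map_map]
      refine Multiset.map_congr rfl (fun z _ => ?_)
      simp
    rw [h1, hdual, Multiset.map_map]
    rfl
  have hfactor : M.map (fun z => X - C z⁻¹) = M.map (fun z => C z⁻¹ * -((X - C z).reverse)) := by
    refine Multiset.map_congr rfl (fun z hzM => ?_)
    rw [aux_reverse_X_sub_C, neg_sub, mul_sub, mul_one, ← mul_assoc, ← C_mul,
      inv_mul_cancel₀ (hz z hzM), C_1, one_mul]
  have hsplit : (M.map (fun z => X - C z⁻¹)).prod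
      = C ((-1 : ℂ) ^ c) * (M.map (fun z => X - C z)).prod.reverse := by
    rw [hfactor]
    have hmm : M.map (fun z => C z⁻¹ * -((X - C z).reverse))
        = M.map (fun z => (C z⁻¹ : ℂ[X]) * (-((X - C z).reverse))) := rfl
    rw [hmm, Multiset.prod_map_mul]
    have e1 : (M.map fun z => (C z⁻¹ : ℂ[X])).prod = 1 := by
      have h4 : (M.map fun z => (C z⁻¹ : ℂ[X])) = (M.map Inv.inv).map (C : ℂ →+* ℂ[X]) := by
        rw [Multiset.map_map]; rfl
      rw [h4, Multiset.prod_hom _ (C : ℂ →+* ℂ[X]), Multiset.prod_map_inv', hprod, inv_one,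
        _root_.map_one]
    have e2 : (M.map fun z => -((X - C z).reverse)).prod
        = C ((-1 : ℂ) ^ c) * (M.map (fun z => X - C z)).prod.reverse := by
      have h2 : (M.map fun z => -((X - C z).reverse))
          = (M.map fun z => (X - C z).reverse).map Neg.neg := by
        rw [Multiset.map_map]; rfl
      rw [h2, Multiset.prod_map_neg, Multiset.card_map, hcard]
      have h3 : (M.map fun z => (X - C z).reverse)
          = ((M.map fun z => X - C z).map Polynomial.reverse) := by
        rw [Multiset.map_map]; rfl
      rw [h3, ← aux_reverse_prod]
      congr 1
      rw [_root_.map_pow, _root_.map_neg, _root_.map_one]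
    rw [e1, e2, one_mul]
  have hphi := congrArg (fun p : ℂ[X] => p.coeff (c - k)) (hmapconj.trans hsplit)
  simp only [coeff_map, coeff_C_mul, coeff_reverse] at hphi
  rw [hdeg, revAt_le (Nat.sub_le c k), Nat.sub_sub_self hk] at hphi
  rw [hphi, ← mul_assoc, ← pow_add]
  rw [Even.neg_one_pow ⟨c, rfl⟩, one_mul]
lemma aux_multiset_eq {c : ℕ} (d d' : Fin c → ℂ)
    (hprod : (Finset.univ.val.map d).prod = 1)
    (hprod' : (Finset.univ.val.map d').prod = 1)
    (hdual : (Finset.univ.val.map d).map (starRingEnd ℂ) = (Finset.univ.val.map d).map Inv.inv)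
    (hdual' : (Finset.univ.val.map d').map (starRingEnd ℂ) = (Finset.univ.val.map d').map Inv.inv)
    (htr : ∀ k : ℕ, 1 ≤ k → k ≤ c / 2 → ∑ i, d i ^ k = ∑ i, d' i ^ k) :
    Finset.univ.val.map d = Finset.univ.val.map d' := by
  have hcard : Multiset.card (Finset.univ.val.map d) = c := by
    rw [Multiset.card_map, ← Finset.card_def, Finset.card_univ, Fintype.card_fin]
  have hcard' : Multiset.card (Finset.univ.val.map d') = c := by
    rw [Multiset.card_map, ← Finset.card_def, Finset.card_univ, Fintype.card_fin]
  have hE := aux_esymm_eq d d' htr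
  -- the two polynomials are equal
  have hcoeff : ∀ k, k ≤ c →
      ((Finset.univ.val.map d).map (fun z => X - C z)).prod.coeff k
        = ((Finset.univ.val.map d').map (fun z => X - C z)).prod.coeff k := by
    have base : ∀ k, k ≤ c → c - k ≤ c / 2 →
        ((Finset.univ.val.map d).map (fun z => X - C z)).prod.coeff k
          = ((Finset.univ.val.map d').map (fun z => X - C z)).prod.coeff k := by
      intro k hk h2
      rw [Multiset.prod_X_sub_C_coeff _ (le_of_le_of_eq hk hcard.symm), Multiset.prod_X_sub_C_coeff _ (le_of_le_of_eq hk hcard'.symm),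
        hcard, hcard', hE (c - k) h2]
    intro k hk
    rcases le_or_gt (c - k) (c / 2) with h2 | h2
    · exact base k hk h2
    · have hk2 : k ≤ c / 2 := by omega
      rw [aux_coeff_dual _ hcard hprod hdual hk, aux_coeff_dual _ hcard' hprod' hdual' hk,
        base (c - k) (Nat.sub_le c k) (by omega)]
  have hq : ((Finset.univ.val.map d).map (fun z => X - C z)).prod
      = ((Finset.univ.val.map d').map (fun z => X - C z)).prod := by
    have hmono : ∀ (e : Fin c → ℂ) p, p ∈ ((Finset.univ.val.map e).map (fun z => X - C z)) →
        p.Monic := by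
      intro e p hp
      obtain ⟨z, _, rfl⟩ := Multiset.mem_map.mp hp
      exact monic_X_sub_C z
    have hdeg : ∀ (e : Fin c → ℂ), Multiset.card (Finset.univ.val.map e) = c →
        ((Finset.univ.val.map e).map (fun z => X - C z)).prod.natDegree = c := by
      intro e hc
      rw [natDegree_multiset_prod_of_monic _ (hmono e)]
      simp [Multiset.map_map, Function.comp_def, natDegree_X_sub_C, Multiset.map_const',
        Multiset.sum_replicate, hc]
    ext k
    rcases le_or_gt k c with hk | hk
    · exact hcoeff k hk
    · rw [coeff_eq_zero_of_natDegree_lt (by rw [hdeg d hcard]; exact hk),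
        coeff_eq_zero_of_natDegree_lt (by rw [hdeg d' hcard']; exact hk)]
  have := congrArg Polynomial.roots hq
  rwa [roots_multiset_prod_X_sub_C, roots_multiset_prod_X_sub_C] at this

lemma aux_exists_perm : ∀ (c : ℕ) (d d' : Fin c → ℂ),
    Finset.univ.val.map d = Finset.univ.val.map d' →
    ∃ σ : Equiv.Perm (Fin c), d ∘ σ = d' := by
  intro c
  induction c with
  | zero =>
    intro d d' _
    exact ⟨Equiv.refl _, funext (fun i => absurd i.2 (by omega))⟩
  | succ c ih =>
    intro d d' h
    -- univ.val for Fin (c+1) splits off 0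
    have hsplit : ∀ e : Fin (c + 1) → ℂ,
        Finset.univ.val.map e = e 0 ::ₘ Finset.univ.val.map (e ∘ Fin.succ) := by
      intro e
      rw [Fin.univ_succ, Finset.cons_val, Multiset.map_cons, Finset.map_val, Multiset.map_map]
      rfl
    -- find preimage of d' 0
    have hmem : d' 0 ∈ Finset.univ.val.map d := by
      rw [h, hsplit d']
      exact Multiset.mem_cons_self _ _
    obtain ⟨i, _, hi⟩ := Multiset.mem_map.mp hmem
    set τ : Equiv.Perm (Fin (c + 1)) := Equiv.swap 0 i with hτ
    have hdt : Finset.univ.val.map (d ∘ τ) = Finset.univ.val.map d := by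
      have := Multiset.map_univ_val_equiv (τ : Fin (c+1) ≃ Fin (c+1))
      calc Finset.univ.val.map (d ∘ τ) = (Finset.univ.val.map τ).map d := by
            rw [Multiset.map_map]
        _ = Finset.univ.val.map d := by rw [this]
    have h0 : (d ∘ τ) 0 = d' 0 := by simp [hτ, Equiv.swap_apply_left, hi]
    have htail : Finset.univ.val.map ((d ∘ τ) ∘ Fin.succ)
        = Finset.univ.val.map (d' ∘ Fin.succ) := by
      have h1 : (d ∘ τ) 0 ::ₘ Finset.univ.val.map ((d ∘ τ) ∘ Fin.succ)
          = d' 0 ::ₘ Finset.univ.val.map (d' ∘ Fin.succ) := by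
        rw [← hsplit (d ∘ τ), ← hsplit d', hdt, h]
      rw [h0] at h1
      exact (Multiset.cons_inj_right _).mp h1
    obtain ⟨σ', hσ'⟩ := ih ((d ∘ τ) ∘ Fin.succ) (d' ∘ Fin.succ) htail
    -- assemble
    set σ'' : Equiv.Perm (Fin (c + 1)) := Equiv.Perm.decomposeFin.symm ((0 : Fin (c+1)), σ') with hσ''
    refine ⟨σ''.trans τ, funext (fun j => ?_)⟩
    induction j using Fin.cases with
    | zero =>
      have : σ'' 0 = 0 := Equiv.Perm.decomposeFin_symm_apply_zero (0 : Fin (c+1)) σ'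
      simp only [Function.comp_apply, Equiv.trans_apply, this]
      exact h0
    | succ j =>
      have hs : σ'' j.succ = (Equiv.swap 0 0) (σ' j).succ :=
        Equiv.Perm.decomposeFin_symm_apply_succ σ' (0 : Fin (c+1)) j
      rw [Equiv.swap_self] at hs
      simp only [Function.comp_apply, Equiv.trans_apply, hs, Equiv.refl_apply]
      have := congrFun hσ' j
      simpa using this
lemma Hm_eq (n : ℕ) (i j : Fin (n+1)) :
    Hm n i j = if j = Equiv.swap 0 (Fin.last n) i then 1 else 0 := by
  unfold Hm
  rcases eq_or_ne i 0 with rfl | h0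
  · rw [Equiv.swap_apply_left]
    rcases eq_or_ne j (Fin.last n) with rfl | hj
    · simp_all [eq_comm]
    · have h1 : ¬(((0:Fin (n+1)) = 0 ∧ j = Fin.last n) ∨
          ((0:Fin (n+1)) = Fin.last n ∧ j = 0)) := by
        rintro (⟨-, h⟩ | ⟨h, rfl⟩)
        · exact hj h
        · exact hj h
      rw [if_neg h1, if_neg (by rintro ⟨-, h, -⟩; exact h rfl), if_neg hj]
  · rcases eq_or_ne i (Fin.last n) with rfl | hl
    · rw [Equiv.swap_apply_right]
      rcases eq_or_ne j 0 with rfl | hj <;> simp_all [eq_comm]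
    · rw [Equiv.swap_apply_of_ne_of_ne h0 hl]
      rcases eq_or_ne j i with rfl | hj <;> simp_all [eq_comm]

lemma Hm_mul_Hm (n : ℕ) : Hm n * Hm n = 1 := by
  ext i j
  rw [Matrix.mul_apply]
  simp only [Hm_eq, Matrix.one_apply]
  rw [Finset.sum_eq_single (Equiv.swap 0 (Fin.last n) i)]
  · simp [Equiv.swap_apply_self, eq_comm]
  · intro b _ hb
    simp [hb]
  · intro habs
    exact absurd (Finset.mem_univ _) habs

noncomputable def permM {c : ℕ} (σ : Equiv.Perm (Fin c)) : Matrix (Fin c) (Fin c) ℂ :=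
  fun i j => if σ j = i then 1 else 0

lemma permM_mul_transpose {c : ℕ} (σ : Equiv.Perm (Fin c)) :
    permM σ * (permM σ)ᵀ = 1 := by
  ext i j
  rw [Matrix.mul_apply]
  simp only [permM, Matrix.transpose_apply, Matrix.one_apply]
  rw [Finset.sum_eq_single (σ.symm i)]
  · rw [Equiv.apply_symm_apply]
    by_cases h : i = j <;> simp [h]
  · intro b _ hb
    have : σ b ≠ i := fun hh => hb (by rw [← hh, Equiv.symm_apply_apply])
    simp [this]
  · intro habs
    exact absurd (Finset.mem_univ _) habs

lemma transpose_mul_permM {c : ℕ} (σ : Equiv.Perm (Fin c)) :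
    (permM σ)ᵀ * permM σ = 1 := by
  ext i j
  rw [Matrix.mul_apply]
  simp only [permM, Matrix.transpose_apply, Matrix.one_apply]
  rw [Finset.sum_eq_single (σ i)]
  · by_cases h : i = j
    · simp [h]
    · have h1 : σ i ≠ σ j := fun hh => h (σ.injective hh)
      have h2 : ¬ j = i := fun hh => h hh.symm
      simp [h, h1, h2]
  · intro b _ hb
    simp [Ne.symm hb]
  · intro habs
    exact absurd (Finset.mem_univ _) habs

lemma permM_diag {c : ℕ} (σ : Equiv.Perm (Fin c)) (d : Fin c → ℂ) :
    permM σ * Matrix.diagonal (d ∘ σ) = Matrix.diagonal d * permM σ := by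
  ext i j
  rw [Matrix.mul_diagonal, Matrix.diagonal_mul]
  rcases eq_or_ne (σ j) i with h | h
  · simp only [permM, if_pos h, Function.comp_apply, mul_one, one_mul, h]
    simp [h]
  · simp [permM, h]

open Polynomial in
lemma aux_props (n : ℕ) (A P : Matrix (Fin (n+1)) (Fin (n+1)) ℂ) (d : Fin (n+1) → ℂ)
    (hdet : A.det = 1) (hform : Aᴴ * Hm n * A = Hm n) (hP : IsUnit P)
    (hAeq : A = P * Matrix.diagonal d * P⁻¹) :
    (Finset.univ.val.map d).prod = 1 ∧
      (Finset.univ.val.map d).map (starRingEnd ℂ) = (Finset.univ.val.map d).map Inv.inv := by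
  have hPd : IsUnit P.det := (Matrix.isUnit_iff_isUnit_det P).mp hP
  have hPinv : P * P⁻¹ = 1 := Matrix.mul_nonsing_inv P hPd
  have hPinv' : P⁻¹ * P = 1 := Matrix.nonsing_inv_mul P hPd
  have h1 : P.det * P⁻¹.det = 1 := by rw [← Matrix.det_mul, hPinv, Matrix.det_one]
  -- prod of d is 1
  have hdd : (Matrix.diagonal d).det = 1 := by
    have : A.det = (Matrix.diagonal d).det := by
      rw [hAeq, Matrix.det_mul, Matrix.det_mul, mul_comm P.det, mul_assoc, h1, mul_one]
    rw [← this, hdet]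
  have hprodF : ∏ i, d i = 1 := by rw [← Matrix.det_diagonal, hdd]
  have hprod : (Finset.univ.val.map d).prod = 1 := by
    rw [← Finset.prod_eq_multiset_prod, hprodF]
  refine ⟨hprod, ?_⟩
  have hd0 : ∀ i, d i ≠ 0 := by
    intro i h0
    rw [Finset.prod_eq_zero (Finset.mem_univ i) h0] at hprodF
    exact zero_ne_one hprodF
  -- A⁻¹
  have hDD : Matrix.diagonal d * Matrix.diagonal (fun i => (d i)⁻¹) = 1 := by
    rw [Matrix.diagonal_mul_diagonal]
    have : (fun i => d i * (d i)⁻¹) = fun _ => (1 : ℂ) :=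
      funext fun i => mul_inv_cancel₀ (hd0 i)
    rw [this, Matrix.diagonal_one]
  have hAinv : A⁻¹ = P * Matrix.diagonal (fun i => (d i)⁻¹) * P⁻¹ := by
    refine Matrix.inv_eq_right_inv ?_
    rw [hAeq]
    calc P * Matrix.diagonal d * P⁻¹ * (P * Matrix.diagonal (fun i => (d i)⁻¹) * P⁻¹)
        = P * Matrix.diagonal d * (P⁻¹ * P) * (Matrix.diagonal (fun i => (d i)⁻¹) * P⁻¹) := by
          noncomm_ring
      _ = P * (Matrix.diagonal d * Matrix.diagonal (fun i => (d i)⁻¹)) * P⁻¹ := by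
          rw [hPinv', mul_one]; noncomm_ring
      _ = 1 := by rw [hDD, mul_one, hPinv]
  -- Aᴴ
  have hQ1 : P⁻¹ᴴ * Pᴴ = 1 := by rw [← Matrix.conjTranspose_mul, hPinv, Matrix.conjTranspose_one]
  have hQ2 : Pᴴ * P⁻¹ᴴ = 1 := by rw [← Matrix.conjTranspose_mul, hPinv', Matrix.conjTranspose_one]
  have hQu : IsUnit P⁻¹ᴴ := by
    rw [Matrix.isUnit_iff_isUnit_det]
    exact IsUnit.of_mul_eq_one _ (by rw [← Matrix.det_mul, hQ1, Matrix.det_one])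
  have hQinv : (P⁻¹ᴴ)⁻¹ = Pᴴ := Matrix.inv_eq_right_inv hQ1
  have hAH : Aᴴ = P⁻¹ᴴ * Matrix.diagonal (star d) * (P⁻¹ᴴ)⁻¹ := by
    rw [hQinv, hAeq, Matrix.conjTranspose_mul, Matrix.conjTranspose_mul,
      Matrix.diagonal_conjTranspose, mul_assoc]
  -- H conjugation
  have hAu : IsUnit A.det := by rw [hdet]; exact isUnit_one
  have hAAinv : A * A⁻¹ = 1 := Matrix.mul_nonsing_inv A hAu
  have hHu : IsUnit (Hm n) := by
    rw [Matrix.isUnit_iff_isUnit_det]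
    exact IsUnit.of_mul_eq_one _ (by rw [← Matrix.det_mul, Hm_mul_Hm, Matrix.det_one])
  have hHinv : (Hm n)⁻¹ = Hm n := Matrix.inv_eq_right_inv (Hm_mul_Hm n)
  have hAHconj : Aᴴ = Hm n * A⁻¹ * (Hm n)⁻¹ := by
    rw [hHinv]
    have h5 : Aᴴ * Hm n = Hm n * A⁻¹ := by
      calc Aᴴ * Hm n = Aᴴ * Hm n * (A * A⁻¹) := by rw [hAAinv, mul_one]
        _ = (Aᴴ * Hm n * A) * A⁻¹ := by noncomm_ring
        _ = Hm n * A⁻¹ := by rw [hform]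
    calc Aᴴ = Aᴴ * (Hm n * Hm n) := by rw [Hm_mul_Hm, mul_one]
      _ = (Aᴴ * Hm n) * Hm n := by noncomm_ring
      _ = Hm n * A⁻¹ * Hm n := by rw [h5]
  -- charpoly comparison
  have c1 : Aᴴ.charpoly = ((Finset.univ.val.map (fun i => star (d i))).map
      (fun z => X - Polynomial.C z)).prod := by
    rw [hAH, aux_charpoly_conj _ _ hQu, aux_charpoly_diagonal]
    rfl
  have c2 : Aᴴ.charpoly = ((Finset.univ.val.map (fun i => (d i)⁻¹)).map
      (fun z => X - Polynomial.C z)).prod := by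
    rw [hAHconj, aux_charpoly_conj _ _ hHu, hAinv, aux_charpoly_conj _ _ hP,
      aux_charpoly_diagonal]
  have hroots := congrArg Polynomial.roots (c1.symm.trans c2)
  rw [Polynomial.roots_multiset_prod_X_sub_C, Polynomial.roots_multiset_prod_X_sub_C] at hroots
  calc (Finset.univ.val.map d).map (starRingEnd ℂ)
      = Finset.univ.val.map (fun i => star (d i)) := by rw [Multiset.map_map]; rfl
    _ = Finset.univ.val.map (fun i => (d i)⁻¹) := hroots
    _ = (Finset.univ.val.map d).map Inv.inv := by rw [Multiset.map_map]; rfl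

end Aux

/-- Two loxodromic elements of SU(n,1) are conjugate iff they have the same power traces
tr(A^k) for 1 ≤ k ≤ ⌊(n+1)/2⌋. -/
theorem stmt_15 (n : ℕ) (A A' : Matrix (Fin (n+1)) (Fin (n+1)) ℂ)
    (hA : inSU n A) (hA' : inSU n A')
    (hLA : IsLoxodromic n A) (hLA' : IsLoxodromic n A') :
    (∃ C : Matrix (Fin (n+1)) (Fin (n+1)) ℂ, IsUnit C ∧ C * A * C⁻¹ = A') ↔
      (∀ k : ℕ, 1 ≤ k → k ≤ (n+1)/2 → (A ^ k).trace = (A' ^ k).trace) := by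
  obtain ⟨P, d, r, θ, hP, hAeq, -, -, -, -⟩ := hLA
  obtain ⟨P', d', r', θ', hP', hA'eq, -, -, -, -⟩ := hLA'
  constructor
  · rintro ⟨C, hC, hconj⟩ k hk1 hk2
    rw [← hconj, aux_trace_conj_pow C A hC k]
  · intro htr
    have htr' : ∀ k : ℕ, 1 ≤ k → k ≤ (n+1)/2 → ∑ i, d i ^ k = ∑ i, d' i ^ k := by
      intro k h1 h2
      have t1 := aux_trace_pow P d hP k
      have t2 := aux_trace_pow P' d' hP' k
      rw [← hAeq] at t1
      rw [← hA'eq] at t2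
      rw [← t1, ← t2, htr k h1 h2]
    obtain ⟨hprod, hdual⟩ := aux_props n A P d hA.1 hA.2 hP hAeq
    obtain ⟨hprod', hdual'⟩ := aux_props n A' P' d' hA'.1 hA'.2 hP' hA'eq
    have hMeq := aux_multiset_eq d d' hprod hprod' hdual hdual' htr'
    obtain ⟨σ, hσ⟩ := aux_exists_perm (n+1) d d' hMeq
    have hPd : IsUnit P.det := (Matrix.isUnit_iff_isUnit_det P).mp hP
    have hP'd : IsUnit P'.det := (Matrix.isUnit_iff_isUnit_det P').mp hP'
    have hPinv' : P⁻¹ * P = 1 := Matrix.nonsing_inv_mul P hPd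
    have hP'inv : P' * P'⁻¹ = 1 := Matrix.mul_nonsing_inv P' hP'd
    have hts : (permM σ)ᵀ * permM σ = 1 := transpose_mul_permM σ
    have hD' : (permM σ)ᵀ * Matrix.diagonal d * permM σ = Matrix.diagonal d' := by
      have h6 : Matrix.diagonal d * permM σ = permM σ * Matrix.diagonal (d ∘ σ) :=
        (permM_diag σ d).symm
      calc (permM σ)ᵀ * Matrix.diagonal d * permM σ
          = (permM σ)ᵀ * (Matrix.diagonal d * permM σ) := by rw [mul_assoc]
        _ = (permM σ)ᵀ * (permM σ * Matrix.diagonal (d ∘ σ)) := by rw [h6]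
        _ = ((permM σ)ᵀ * permM σ) * Matrix.diagonal (d ∘ σ) := by rw [mul_assoc]
        _ = Matrix.diagonal (d ∘ σ) := by rw [hts, one_mul]
        _ = Matrix.diagonal d' := by rw [hσ]
    have hCinvEq : (P' * (permM σ)ᵀ * P⁻¹) * (P * permM σ * P'⁻¹) = 1 := by
      calc (P' * (permM σ)ᵀ * P⁻¹) * (P * permM σ * P'⁻¹)
          = P' * (permM σ)ᵀ * (P⁻¹ * P) * (permM σ * P'⁻¹) := by noncomm_ring
        _ = P' * ((permM σ)ᵀ * permM σ) * P'⁻¹ := by rw [hPinv', mul_one]; noncomm_ring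
        _ = 1 := by rw [hts, mul_one, hP'inv]
    have hCinv : (P' * (permM σ)ᵀ * P⁻¹)⁻¹ = P * permM σ * P'⁻¹ :=
      Matrix.inv_eq_right_inv hCinvEq
    refine ⟨P' * (permM σ)ᵀ * P⁻¹, ?_, ?_⟩
    · rw [Matrix.isUnit_iff_isUnit_det]
      exact IsUnit.of_mul_eq_one (P * permM σ * P'⁻¹).det
        (by rw [← Matrix.det_mul, hCinvEq, Matrix.det_one])
    · rw [hCinv, hAeq, hA'eq]
      calc (P' * (permM σ)ᵀ * P⁻¹) * (P * Matrix.diagonal d * P⁻¹) * (P * permM σ * P'⁻¹)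
          = P' * (permM σ)ᵀ * (P⁻¹ * P) * Matrix.diagonal d * (P⁻¹ * P) * permM σ * P'⁻¹ := by
            noncomm_ring
        _ = P' * ((permM σ)ᵀ * Matrix.diagonal d * permM σ) * P'⁻¹ := by
            rw [hPinv']; noncomm_ring
        _ = P' * Matrix.diagonal d' * P'⁻¹ := by rw [hD']
end

section
/- Let C ∈ SU(n,1) and let p_1,...,p_n and p_1',...,p_n' be null vectors in ℂ^{n+1} satisfying the normalization ⟨p_1,p_i⟩ = −1/√2 = ⟨p_1',p_i'⟩ and ⟨p_2,p_i⟩ = 1/√2 = ⟨p_2',p_i'⟩ for 3 ≤ i ≤ n, and ⟨p_1,p_2⟩ = 1 = ⟨p_1',p_2'⟩. If C p_i = α_i p_i' for scalars α_i (1 ≤ i ≤ n), then all α_i are equal to a common unimodular constant α with α_i = α and |α| = 1. -/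
open Matrix Complex

lemma herm_pres (n : ℕ) (C : Matrix (Fin (n+1)) (Fin (n+1)) ℂ)
    (h : Cᴴ * Hm n * C = Hm n) (z w : Fin (n+1) → ℂ) :
    herm n (C.mulVec z) (C.mulVec w) = herm n z w := by
  unfold herm
  rw [Matrix.star_mulVec, Matrix.mulVec_mulVec, Matrix.dotProduct_mulVec,
    Matrix.vecMul_vecMul, ← Matrix.mul_assoc, h, ← Matrix.dotProduct_mulVec]

lemma herm_smul (n : ℕ) (a b : ℂ) (z w : Fin (n+1) → ℂ) :
    herm n (a • z) (b • w) = a * (starRingEnd ℂ) b * herm n z w := by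
  simp [herm, Matrix.mulVec_smul, dotProduct_smul, smul_dotProduct,
    star_smul, smul_eq_mul]
  ring

/-- If C ∈ SU(n,1) maps each normalized eigenpoint p_i to a multiple α_i p_i' of the
correspondingly normalized p_i', then all α_i agree and are unimodular. -/
theorem stmt_18 (n : ℕ) (hn : 3 ≤ n) (C : Matrix (Fin (n+1)) (Fin (n+1)) ℂ) (hC : inSU n C)
    (p p' : ℕ → (Fin (n+1) → ℂ)) (α : ℕ → ℂ)
    (hpz : ∀ i, 1 ≤ i → i ≤ n → p i ≠ 0 ∧ p' i ≠ 0)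
    (hnull : ∀ i, 1 ≤ i → i ≤ n → herm n (p i) (p i) = 0 ∧ herm n (p' i) (p' i) = 0)
    (h12 : herm n (p 1) (p 2) = 1) (h12' : herm n (p' 1) (p' 2) = 1)
    (h1i : ∀ i, 3 ≤ i → i ≤ n → herm n (p 1) (p i) = -(1 / Real.sqrt 2))
    (h1i' : ∀ i, 3 ≤ i → i ≤ n → herm n (p' 1) (p' i) = -(1 / Real.sqrt 2))
    (h2i : ∀ i, 3 ≤ i → i ≤ n → herm n (p 2) (p i) = 1 / Real.sqrt 2)
    (h2i' : ∀ i, 3 ≤ i → i ≤ n → herm n (p' 2) (p' i) = 1 / Real.sqrt 2)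
    (hmap : ∀ i, 1 ≤ i → i ≤ n → C.mulVec (p i) = α i • p' i) :
    ∃ a : ℂ, ‖a‖ = 1 ∧ ∀ i, 1 ≤ i → i ≤ n → α i = a := by
  obtain ⟨-, hH⟩ := hC
  -- key identity
  have key : ∀ i j, 1 ≤ i → i ≤ n → 1 ≤ j → j ≤ n →
      herm n (p i) (p j) = α i * (starRingEnd ℂ) (α j) * herm n (p' i) (p' j) := by
    intro i j hi1 hin hj1 hjn
    rw [← herm_pres n C hH (p i) (p j), hmap i hi1 hin, hmap j hj1 hjn, herm_smul]
  have hs2 : ((Real.sqrt 2 : ℝ) : ℂ) ≠ 0 := by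
    norm_cast
    positivity
  have hval : (-(1 / (Real.sqrt 2 : ℝ)) : ℂ) ≠ 0 := by
    simp [hs2]
  -- equations
  have e12 : α 1 * (starRingEnd ℂ) (α 2) = 1 := by
    have := key 1 2 le_rfl (by omega) (by omega) (by omega)
    rw [h12, h12', mul_one] at this
    exact this.symm
  have e1i : ∀ i, 3 ≤ i → i ≤ n → α 1 * (starRingEnd ℂ) (α i) = 1 := by
    intro i h3 hin
    have := key 1 i (by omega) (by omega) (by omega) hin
    rw [h1i i h3 hin, h1i' i h3 hin] at this
    have h' : α 1 * (starRingEnd ℂ) (α i) * (-(1 / (Real.sqrt 2 : ℝ)) : ℂ)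
        = 1 * (-(1 / (Real.sqrt 2 : ℝ)) : ℂ) := by rw [one_mul]; linear_combination -this
    exact mul_right_cancel₀ hval h' 
  have e2i : ∀ i, 3 ≤ i → i ≤ n → α 2 * (starRingEnd ℂ) (α i) = 1 := by
    intro i h3 hin
    have := key 2 i (by omega) (by omega) (by omega) hin
    rw [h2i i h3 hin, h2i' i h3 hin] at this
    have hval2 : ((1 : ℂ) / (Real.sqrt 2 : ℝ)) ≠ 0 := by simp [hs2]
    have h' : α 2 * (starRingEnd ℂ) (α i) * ((1 : ℂ) / (Real.sqrt 2 : ℝ))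
        = 1 * ((1 : ℂ) / (Real.sqrt 2 : ℝ)) := by rw [one_mul]; linear_combination -this
    exact mul_right_cancel₀ hval2 h' 
  have e13 := e1i 3 le_rfl hn
  have e23 := e2i 3 le_rfl hn
  have hα3 : (starRingEnd ℂ) (α 3) ≠ 0 := by
    intro h; rw [h, mul_zero] at e13; exact zero_ne_one (α := ℂ) e13
  have h12eq : α 1 = α 2 := mul_right_cancel₀ hα3 (e13.trans e23.symm)
  have e11 : α 1 * (starRingEnd ℂ) (α 1) = 1 := by nth_rewrite 2 [h12eq]; exact e12
  have hα1 : α 1 ≠ 0 := by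
    intro h; rw [h, zero_mul] at e11; exact zero_ne_one (α := ℂ) e11
  refine ⟨α 1, ?_, ?_⟩
  · have : (Complex.normSq (α 1) : ℂ) = 1 := by
      rw [← Complex.mul_conj]; exact e11
    have h2 : Complex.normSq (α 1) = 1 := by exact_mod_cast this
    rw [Complex.norm_def, h2, Real.sqrt_one]
  · intro i hi1 hin
    rcases Nat.lt_or_ge i 3 with h3 | h3
    · interval_cases i
      · rfl
      · exact h12eq.symm
    · have hi := e1i i h3 hin
      have : (starRingEnd ℂ) (α i) = (starRingEnd ℂ) (α 1) :=
        mul_left_cancel₀ hα1 (hi.trans e11.symm)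
      exact (starRingEnd ℂ).injective this
end
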